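/- arXiv:2601.18964 — 2 statements merged into one kernel-verified Lean document; each statement's English description precedes it below -/
import Mathlib

section
/- Let A be an n×n real symmetric matrix that is bipartite (there is a ±1 diagonal matrix S with S·A·S = −A), let u be an index, and let E₀ be the orthogonal spectral projection of A for the eigenvalue 0. Suppose E₀·e_u ≠ 0, (E₀)_{u,u} < 1/2, and there is exactly one positive real number λ in the eigenvalue support of u (i.e., exactly one λ > 0 with E_λ·e_u ≠ 0). Then exp(i(π/λ)A)_{u,u} is a negative real number, and u is not sedentary: inf_{t>0} |exp(itA)_{u,u}| = 0. -/
open Matrix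
open scoped Kronecker

/-- Transition matrix `U(t) = exp(itA)` of the continuous-time quantum walk on the
weighted graph with real symmetric adjacency matrix `A`. -/
noncomputable def transition {m : Type*} [Fintype m] [DecidableEq m]
    (A : Matrix m m ℝ) (t : ℝ) : Matrix m m ℂ :=
  NormedSpace.exp ((Complex.I * t) • A.map (fun x : ℝ => (x : ℂ)))

/-- A vertex `u` is sedentary if `inf_{t>0} |U(t)_{u,u}| > 0`. -/
noncomputable def Sedentary {m : Type*} [Fintype m] [DecidableEq m]
    (A : Matrix m m ℝ) (u : m) : Prop :=
  0 < ⨅ t : {t : ℝ // 0 < t}, ‖transition A t u u‖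

/-- `E` is the orthogonal spectral projection of `A` for the eigenvalue `θ`:
`E` is real symmetric, idempotent, and for every vector `v`, `A·v = θ·v ↔ E·v = v`. -/
def IsSpectralProj {m : Type*} [Fintype m] [DecidableEq m]
    (A : Matrix m m ℝ) (θ : ℝ) (E : Matrix m m ℝ) : Prop :=
  E.IsSymm ∧ E * E = E ∧ ∀ v : m → ℝ, A.mulVec v = θ • v ↔ E.mulVec v = v

lemma sp_absorb {n : ℕ} {A E F : Matrix (Fin n) (Fin n) ℝ} {θ : ℝ}
    (hE : IsSpectralProj A θ E) (hF : IsSpectralProj A θ F) : F * E = E := by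
  obtain ⟨hEs, hEi, hEc⟩ := hE
  obtain ⟨hFs, hFi, hFc⟩ := hF
  ext i j
  have h1 : E.mulVec (E.mulVec (Pi.single j 1)) = E.mulVec (Pi.single j 1) := by
    rw [Matrix.mulVec_mulVec, hEi]
  have h3 : F.mulVec (E.mulVec (Pi.single j 1)) = E.mulVec (Pi.single j 1) :=
    (hFc _).mp ((hEc _).mpr h1)
  rw [Matrix.mulVec_mulVec] at h3
  have := congrFun h3 i
  simpa [Matrix.mulVec_single] using this

lemma sp_unique {n : ℕ} {A E F : Matrix (Fin n) (Fin n) ℝ} {θ : ℝ}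
    (hE : IsSpectralProj A θ E) (hF : IsSpectralProj A θ F) : E = F := by
  have h1 : F * E = E := sp_absorb hE hF
  have h2 : E * F = F := sp_absorb hF hE
  have h3 := congrArg Matrix.transpose h1
  rw [Matrix.transpose_mul, hE.1, hF.1, h2] at h3
  exact h3.symm

lemma sp_diag_eq_sum {n : ℕ} {A E : Matrix (Fin n) (Fin n) ℝ} {θ : ℝ}
    (hE : IsSpectralProj A θ E) (u : Fin n) : E u u = ∑ j, (E u j) ^ 2 := by
  conv_lhs => rw [← hE.2.1]
  rw [Matrix.mul_apply]
  refine Finset.sum_congr rfl fun j _ => ?_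
  rw [sq]
  congr 1
  exact (congrFun (congrFun hE.1 u) j).symm ▸ rfl

lemma sp_diag_pos {n : ℕ} {A E : Matrix (Fin n) (Fin n) ℝ} {θ : ℝ}
    (hE : IsSpectralProj A θ E) (u : Fin n)
    (hne : E.mulVec (Pi.single u 1) ≠ 0) : 0 < E u u := by
  rcases lt_or_eq_of_le (by positivity : (0:ℝ) ≤ ∑ j, (E u j) ^ 2) with h | h
  · rw [sp_diag_eq_sum hE]; exact h
  · exfalso
    apply hne
    have hz : ∀ j ∈ Finset.univ, (E u j) ^ 2 = 0 := by
      intro j _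
      exact (Finset.sum_eq_zero_iff_of_nonneg (fun j _ => by positivity)).mp h.symm j
        (Finset.mem_univ j)
    funext i
    have hEui : E u i = 0 := pow_eq_zero_iff two_ne_zero |>.mp (hz i (Finset.mem_univ i))
    have hEiu : E i u = 0 := by
      rw [← hEui]
      exact (congrFun (congrFun hE.1 i) u).symm ▸ rfl
    simp [Matrix.mulVec_single, hEiu]

lemma sp_diag_zero {n : ℕ} {E : Matrix (Fin n) (Fin n) ℝ} (u : Fin n)
    (h : E.mulVec (Pi.single u 1) = 0) : E u u = 0 := by
  have := congrFun h u
  simpa [Matrix.mulVec_single] using this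

lemma sp_construct {n : ℕ} {A V : Matrix (Fin n) (Fin n) ℝ} {μ : Fin n → ℝ}
    (hspec : A = V * diagonal μ * Vᵀ) (h1 : V * Vᵀ = 1) (h2 : Vᵀ * V = 1) (θ : ℝ) :
    IsSpectralProj A θ (V * diagonal (fun i => if μ i = θ then (1:ℝ) else 0) * Vᵀ) := by
  set g : Fin n → ℝ := fun i => if μ i = θ then (1:ℝ) else 0 with hg
  have hgg : diagonal g * diagonal g = diagonal g := by
    rw [diagonal_mul_diagonal]
    refine congrArg diagonal (funext fun i => ?_)
    by_cases h : μ i = θ <;> simp [hg, h]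
  have hinjT : ∀ x y : Fin n → ℝ, Vᵀ *ᵥ x = Vᵀ *ᵥ y ↔ x = y := by
    intro x y
    constructor
    · intro h
      have := congrArg V.mulVec h
      rwa [Matrix.mulVec_mulVec, Matrix.mulVec_mulVec, h1, Matrix.one_mulVec,
        Matrix.one_mulVec] at this
    · intro h; rw [h]
  refine ⟨?_, ?_, ?_⟩
  · show _ᵀ = _
    rw [transpose_mul, transpose_mul, transpose_transpose, diagonal_transpose, Matrix.mul_assoc]
  · have e1 : (V * diagonal g * Vᵀ) * (V * diagonal g * Vᵀ)
        = V * (diagonal g * ((Vᵀ * V) * (diagonal g * Vᵀ))) := by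
      simp only [Matrix.mul_assoc]
    rw [e1, h2, Matrix.one_mul, ← Matrix.mul_assoc (diagonal g), hgg, ← Matrix.mul_assoc]
  · intro v
    set w := Vᵀ *ᵥ v with hw
    have hVtA : Vᵀ * A = diagonal μ * Vᵀ := by
      rw [hspec, ← Matrix.mul_assoc, ← Matrix.mul_assoc, h2, Matrix.one_mul]
    have hVtP : Vᵀ * (V * diagonal g * Vᵀ) = diagonal g * Vᵀ := by
      rw [← Matrix.mul_assoc, ← Matrix.mul_assoc, h2, Matrix.one_mul]
    have lhs : A *ᵥ v = θ • v ↔ ∀ i, μ i * w i = θ * w i := by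
      rw [← hinjT (A *ᵥ v) (θ • v), Matrix.mulVec_mulVec, hVtA, ← Matrix.mulVec_mulVec,
        Matrix.mulVec_smul, ← hw, funext_iff]
      apply forall_congr'
      intro i
      simp [Matrix.mulVec_diagonal]
    have rhs : (V * diagonal g * Vᵀ) *ᵥ v = v ↔ ∀ i, g i * w i = w i := by
      rw [← hinjT ((V * diagonal g * Vᵀ) *ᵥ v) v, Matrix.mulVec_mulVec, hVtP,
        ← Matrix.mulVec_mulVec, ← hw, funext_iff]
      apply forall_congr'
      intro i
      simp [Matrix.mulVec_diagonal]
    rw [lhs, rhs]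
    apply forall_congr'
    intro i
    by_cases h : μ i = θ
    · simp [hg, h]
    · simp only [hg, if_neg h, zero_mul]
      constructor
      · intro hmul
        have hmz : (μ i - θ) * w i = 0 := by ring_nf; linarith [hmul]
        rcases mul_eq_zero.mp hmz with h' | h'
        · exact absurd (by linarith) h
        · exact h'.symm
      · intro h0
        rw [← h0]
        ring

lemma sp_flip {n : ℕ} {A E S : Matrix (Fin n) (Fin n) ℝ} {θ : ℝ}
    (hSsymm : S.IsSymm) (hS2 : S * S = 1) (hsas : S * A * S = -A)
    (hE : IsSpectralProj A θ E) : IsSpectralProj A (-θ) (S * E * S) := by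
  have hanti : S * A = -(A * S) := by
    have h := congrArg (· * S) hsas
    rw [Matrix.mul_assoc (S * A) S S, hS2, Matrix.mul_one, neg_mul] at h
    exact h
  have hAS : A * S = -(S * A) := by rw [hanti, neg_neg]
  refine ⟨?_, ?_, ?_⟩
  · show _ᵀ = _
    rw [Matrix.transpose_mul, Matrix.transpose_mul, hSsymm, hE.1, ← Matrix.mul_assoc]
  · have e1 : (S*E*S)*(S*E*S) = S*(E*((S*S)*(E*S))) := by simp only [Matrix.mul_assoc]
    rw [e1, hS2, Matrix.one_mul, ← Matrix.mul_assoc E E S, hE.2.1, ← Matrix.mul_assoc]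
  · intro v
    have hSinj : ∀ x y : Fin n → ℝ, S *ᵥ x = S *ᵥ y → x = y := by
      intro x y h
      have := congrArg S.mulVec h
      rwa [Matrix.mulVec_mulVec, Matrix.mulVec_mulVec, hS2, Matrix.one_mulVec,
        Matrix.one_mulVec] at this
    constructor
    · intro h
      have hAw : A *ᵥ (S *ᵥ v) = θ • (S *ᵥ v) := by
        rw [Matrix.mulVec_mulVec, hAS, Matrix.neg_mulVec, ← Matrix.mulVec_mulVec, h,
          Matrix.mulVec_smul]
        simp
      have hEw : E *ᵥ (S *ᵥ v) = S *ᵥ v := (hE.2.2 _).mp hAw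
      calc (S * E * S) *ᵥ v = S *ᵥ (E *ᵥ (S *ᵥ v)) := by
            simp only [Matrix.mulVec_mulVec, Matrix.mul_assoc]
        _ = S *ᵥ (S *ᵥ v) := by rw [hEw]
        _ = v := by rw [Matrix.mulVec_mulVec, hS2, Matrix.one_mulVec]
    · intro h
      have hEw : E *ᵥ (S *ᵥ v) = S *ᵥ v := by
        apply hSinj
        calc S *ᵥ (E *ᵥ (S *ᵥ v)) = (S * E * S) *ᵥ v := by
              simp only [Matrix.mulVec_mulVec, Matrix.mul_assoc]
          _ = v := h
          _ = S *ᵥ (S *ᵥ v) := by rw [Matrix.mulVec_mulVec, hS2, Matrix.one_mulVec]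
      have hAw : A *ᵥ (S *ᵥ v) = θ • (S *ᵥ v) := (hE.2.2 _).mpr hEw
      have h0 : (A * S) *ᵥ (S *ᵥ v) = A *ᵥ v := by
        rw [Matrix.mulVec_mulVec, Matrix.mul_assoc, hS2, Matrix.mul_one]
      calc A *ᵥ v = (A * S) *ᵥ (S *ᵥ v) := h0.symm
        _ = (-(S * A)) *ᵥ (S *ᵥ v) := by rw [show A * S = -(S * A) from hAS]
        _ = -(S *ᵥ (A *ᵥ (S *ᵥ v))) := by
            rw [Matrix.neg_mulVec, ← Matrix.mulVec_mulVec]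
        _ = -(S *ᵥ (θ • (S *ᵥ v))) := by rw [hAw]
        _ = (-θ) • v := by
            rw [Matrix.mulVec_smul, Matrix.mulVec_mulVec, hS2, Matrix.one_mulVec, neg_smul]

lemma transition_eq {n : ℕ} {A V : Matrix (Fin n) (Fin n) ℝ} {μ : Fin n → ℝ}
    (hspec : A = V * diagonal μ * Vᵀ) (h1 : V * Vᵀ = 1) (h2 : Vᵀ * V = 1)
    (u : Fin n) (t : ℝ) :
    transition A t u u = ∑ i, Complex.exp (Complex.I * t * μ i) * ((V u i : ℂ))^2 := by
  classical
  set f : ℝ →+* ℂ := Complex.ofRealHom with hf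
  set Vc : Matrix (Fin n) (Fin n) ℂ := V.map (fun x : ℝ => (x : ℂ)) with hVc
  have hmapc : ∀ M : Matrix (Fin n) (Fin n) ℝ, M.map (fun x : ℝ => (x : ℂ)) = M.map f := by
    intro M; rfl
  have hc1 : Vc * Vcᵀ = 1 := by
    rw [hVc, ← Matrix.transpose_map, hmapc V, hmapc Vᵀ, ← Matrix.map_mul (f := f), h1,
      Matrix.map_one f (map_zero f) (map_one f)]
  have hc2 : Vcᵀ * Vc = 1 := by
    rw [hVc, ← Matrix.transpose_map, hmapc V, hmapc Vᵀ, ← Matrix.map_mul (f := f), h2,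
      Matrix.map_one f (map_zero f) (map_one f)]
  set U : (Matrix (Fin n) (Fin n) ℂ)ˣ := ⟨Vc, Vcᵀ, hc1, hc2⟩ with hU
  have hUc : (U : Matrix (Fin n) (Fin n) ℂ) = Vc := rfl
  have hUinv : ((U⁻¹ : (Matrix (Fin n) (Fin n) ℂ)ˣ) : Matrix (Fin n) (Fin n) ℂ) = Vcᵀ := rfl
  have hmap : (Complex.I * t) • A.map (fun x : ℝ => (x : ℂ))
      = (U : Matrix (Fin n) (Fin n) ℂ) * diagonal (fun i => Complex.I * t * μ i) *
        ((U⁻¹ : (Matrix (Fin n) (Fin n) ℂ)ˣ) : Matrix (Fin n) (Fin n) ℂ) := by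
    have hAc : A.map (fun x : ℝ => (x : ℂ)) = Vc * diagonal (fun i => (μ i : ℂ)) * Vcᵀ := by
      rw [hspec, hmapc, Matrix.map_mul (f := f), Matrix.map_mul (f := f),
        Matrix.diagonal_map (map_zero f), Matrix.transpose_map]
      rfl
    rw [hAc, hUc, hUinv, ← smul_mul_assoc, ← mul_smul_comm, ← Matrix.diagonal_smul]
    congr 2
  rw [transition, hmap, Matrix.exp_units_conj U, Matrix.exp_diagonal, hUc, hUinv,
    Matrix.mul_apply]
  refine Finset.sum_congr rfl fun i _ => ?_
  rw [Matrix.mul_diagonal]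
  have hexp : NormedSpace.exp (fun i => Complex.I * t * μ i) i
      = Complex.exp (Complex.I * t * μ i) := by
    rw [Pi.exp_def, Complex.exp_eq_exp_ℂ]
  rw [hexp]
  simp [hVc, sq]
  ring
/-- for a bipartite real symmetric matrix `A` and a vertex `u` with
`E₀·e_u ≠ 0`, `(E₀)_{u,u} < 1/2`, and exactly one positive eigenvalue `λ₀` in the
eigenvalue support of `u`, the entry `exp(i(π/λ₀)A)_{u,u}` is a negative real number and
`u` is not sedentary. -/
theorem stmt15 {n : ℕ} (A : Matrix (Fin n) (Fin n) ℝ) (hA : A.IsSymm)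
    (d : Fin n → ℝ) (hd : ∀ i, d i = 1 ∨ d i = -1)
    (S : Matrix (Fin n) (Fin n) ℝ) (hS : S = Matrix.diagonal d)
    (hbip : S * A * S = -A)
    (u : Fin n)
    (E0 : Matrix (Fin n) (Fin n) ℝ) (hE0 : IsSpectralProj A 0 E0)
    (hsupp0 : E0.mulVec (Pi.single u 1) ≠ 0)
    (hlt : E0 u u < 1 / 2)
    (lam : ℝ) (hlam : 0 < lam)
    (Elam : Matrix (Fin n) (Fin n) ℝ) (hElam : IsSpectralProj A lam Elam)
    (hsupplam : Elam.mulVec (Pi.single u 1) ≠ 0)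
    (huniq : ∀ μ : ℝ, 0 < μ → μ ≠ lam →
      ∀ F : Matrix (Fin n) (Fin n) ℝ, IsSpectralProj A μ F →
        F.mulVec (Pi.single u 1) = 0) :
    ((transition A (Real.pi / lam) u u).im = 0 ∧
      (transition A (Real.pi / lam) u u).re < 0) ∧
    (⨅ t : {t : ℝ // 0 < t}, ‖transition A t u u‖) = 0 := by
  classical
  -- Hermitian structure and real spectral decomposition
  have hA' : A.IsHermitian := by
    rw [Matrix.IsHermitian, Matrix.conjTranspose_eq_transpose_of_trivial]
    exact hA
  set V : Matrix (Fin n) (Fin n) ℝ := (hA'.eigenvectorUnitary : Matrix (Fin n) (Fin n) ℝ)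
    with hV
  set μ : Fin n → ℝ := hA'.eigenvalues with hμ
  have h1 : V * Vᵀ = 1 := by
    have hmem := hA'.eigenvectorUnitary.2
    rw [Matrix.mem_unitaryGroup_iff] at hmem
    rw [← Matrix.conjTranspose_eq_transpose_of_trivial]
    exact hmem
  have h2 : Vᵀ * V = 1 := by
    have hmem := hA'.eigenvectorUnitary.2
    rw [Matrix.mem_unitaryGroup_iff'] at hmem
    rw [← Matrix.conjTranspose_eq_transpose_of_trivial]
    exact hmem
  have hspec : A = V * diagonal μ * Vᵀ := by
    have h := hA'.spectral_theorem
    rw [Unitary.conjStarAlgAut_apply] at h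
    rw [hV, hμ, ← Matrix.conjTranspose_eq_transpose_of_trivial]
    convert h using 3 <;> rfl
  -- the projections P θ
  set P : ℝ → Matrix (Fin n) (Fin n) ℝ :=
    fun θ => V * diagonal (fun i => if μ i = θ then (1:ℝ) else 0) * Vᵀ with hPdef
  have hP : ∀ θ, IsSpectralProj A θ (P θ) := fun θ => sp_construct hspec h1 h2 θ
  set c : Fin n → ℝ := fun i => (V u i)^2 with hc
  have hPuu : ∀ θ : ℝ, P θ u u = ∑ i, (if μ i = θ then c i else 0) := by
    intro θ
    rw [hPdef]
    simp only
    rw [Matrix.mul_apply]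
    refine Finset.sum_congr rfl fun i _ => ?_
    rw [Matrix.mul_diagonal, Matrix.transpose_apply]
    by_cases h : μ i = θ
    · rw [if_pos h, if_pos h, hc]; ring
    · rw [if_neg h, if_neg h]; ring
  have hsum1 : ∑ i, c i = 1 := by
    have h := congrFun (congrFun h1 u) u
    rw [Matrix.mul_apply] at h
    have : ∑ j, V u j * Vᵀ j u = ∑ j, c j := by
      refine Finset.sum_congr rfl fun j _ => ?_
      simp [hc, Matrix.transpose_apply, sq]
    rw [this] at h
    rw [h, Matrix.one_apply_eq]
  -- bipartite structure
  have hSsymm : S.IsSymm := by rw [hS]; exact Matrix.isSymm_diagonal d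
  have hS2 : S * S = 1 := by
    rw [hS, diagonal_mul_diagonal, ← Matrix.diagonal_one]
    refine congrArg diagonal (funext fun i => ?_)
    rcases hd i with h | h <;> rw [h] <;> norm_num
  have hSentry : ∀ X : Matrix (Fin n) (Fin n) ℝ, (S * X * S) u u = X u u := by
    intro X
    rw [hS, Matrix.mul_diagonal, Matrix.diagonal_mul]
    rcases hd u with h | h <;> rw [h] <;> ring
  have hflip : ∀ θ : ℝ, P (-θ) u u = P θ u u := by
    intro θ
    have := sp_unique (hP (-θ)) (sp_flip hSsymm hS2 hbip (hP θ))
    rw [this, hSentry]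
  -- eigenvalue support facts
  have hE0P : E0 = P 0 := sp_unique hE0 (hP 0)
  have hElamP : Elam = P lam := sp_unique hElam (hP lam)
  have ha_pos : 0 < P 0 u u := hE0P ▸ sp_diag_pos hE0 u hsupp0
  have ha_lt : P 0 u u < 1 / 2 := hE0P ▸ hlt
  have hb_pos : 0 < P lam u u := hElamP ▸ sp_diag_pos hElam u hsupplam
  set a : ℝ := P 0 u u with ha
  set b : ℝ := P lam u u with hb
  have hterm_of_zero : ∀ θ : ℝ, P θ u u = 0 → ∀ i, μ i = θ → c i = 0 := by
    intro θ h i hi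
    rw [hPuu θ] at h
    have := (Finset.sum_eq_zero_iff_of_nonneg
      (fun j _ => by by_cases hj : μ j = θ <;> simp [hj, hc] <;> positivity)).mp h i (Finset.mem_univ i)
    rwa [if_pos hi] at this
  have hzero : ∀ i, μ i ≠ 0 → μ i ≠ lam → μ i ≠ -lam → c i = 0 := by
    intro i h0 hl hnl
    rcases lt_trichotomy (μ i) 0 with hneg | hz | hpos
    · have hposneg : 0 < -μ i := by linarith
      have hne : -μ i ≠ lam := fun h => hnl (by linarith)
      have hzero' : P (-μ i) u u = 0 :=
        sp_diag_zero u (huniq (-μ i) hposneg hne (P (-μ i)) (hP (-μ i)))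
      have : P (μ i) u u = 0 := by
        have h' := hflip (-μ i)
        rw [neg_neg] at h'
        rw [h', hzero']
      exact hterm_of_zero (μ i) this i rfl
    · exact absurd hz h0
    · have hzero' : P (μ i) u u = 0 :=
        sp_diag_zero u (huniq (μ i) hpos hl (P (μ i)) (hP (μ i)))
      exact hterm_of_zero (μ i) hzero' i rfl
  have hbflip : P (-lam) u u = b := by rw [hflip lam]
  -- sum decomposition
  have hkey : ∀ i, c i = (if μ i = 0 then c i else 0) + (if μ i = lam then c i else 0)
      + (if μ i = -lam then c i else 0) := by
    intro i
    rcases eq_or_ne (μ i) 0 with h0 | h0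
    · rw [if_pos h0, if_neg (by rw [h0]; intro h; linarith), if_neg (by rw [h0]; intro h; linarith)]
      ring
    rcases eq_or_ne (μ i) lam with hl | hl
    · rw [if_neg h0, if_pos hl, if_neg (by rw [hl]; intro h; linarith)]; ring
    rcases eq_or_ne (μ i) (-lam) with hnl | hnl
    · rw [if_neg h0, if_neg hl, if_pos hnl]; ring
    · rw [if_neg h0, if_neg hl, if_neg hnl, hzero i h0 hl hnl]; ring
  have hab : a + b + b = 1 := by
    have : ∑ i, c i = (∑ i, (if μ i = 0 then c i else 0)) + (∑ i, (if μ i = lam then c i else 0))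
        + (∑ i, (if μ i = -lam then c i else 0)) := by
      rw [← Finset.sum_add_distrib, ← Finset.sum_add_distrib]
      exact Finset.sum_congr rfl fun i _ => hkey i
    rw [hsum1, ← hPuu 0, ← hPuu lam, ← hPuu (-lam), hbflip] at this
    linarith [this]
  -- transition as real function
  have hform : ∀ t : ℝ, transition A t u u = ((a + 2*b*Real.cos (t*lam) : ℝ) : ℂ) := by
    intro t
    rw [transition_eq hspec h1 h2 u t]
    have hterm : ∀ i ∈ Finset.univ, Complex.exp (Complex.I * t * μ i) * ((V u i : ℂ))^2
        = (((if μ i = 0 then c i else 0) : ℝ) : ℂ)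
          + Complex.exp (Complex.I*t*lam) * (((if μ i = lam then c i else 0) : ℝ) : ℂ)
          + Complex.exp (-(Complex.I*t*lam)) * (((if μ i = -lam then c i else 0) : ℝ) : ℂ) := by
      intro i _
      have hcc : ((V u i : ℂ))^2 = ((c i : ℝ) : ℂ) := by
        rw [hc]; push_cast; ring
      rcases eq_or_ne (μ i) 0 with h0 | h0
      · rw [h0, if_pos rfl, if_neg (by intro h; linarith), if_neg (by intro h; linarith), hcc]
        push_cast
        simp
      rcases eq_or_ne (μ i) lam with hl | hl
      · rw [hl, if_neg (show ¬(lam = 0) by intro h; linarith), if_pos rfl,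
          if_neg (show ¬(lam = -lam) by intro h; linarith), hcc]
        push_cast
        ring
      rcases eq_or_ne (μ i) (-lam) with hnl | hnl
      · rw [hnl, if_neg (show ¬(-lam = 0) by intro h; linarith),
          if_neg (show ¬(-lam = lam) by intro h; linarith), if_pos rfl, hcc,
          show Complex.I * (t : ℂ) * ((-lam : ℝ) : ℂ) = -(Complex.I * t * lam) by
            push_cast; ring]
        push_cast
        ring
      · rw [if_neg h0, if_neg hl, if_neg hnl, hcc, hzero i h0 hl hnl]
        push_cast
        ring
    rw [Finset.sum_congr rfl hterm, Finset.sum_add_distrib, Finset.sum_add_distrib,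
      ← Finset.mul_sum, ← Finset.mul_sum]
    have hA0 : ∑ i, (((if μ i = 0 then c i else 0) : ℝ) : ℂ) = ((a : ℝ) : ℂ) := by
      rw [ha, hPuu 0]; push_cast; rfl
    have hAl : ∑ i, (((if μ i = lam then c i else 0) : ℝ) : ℂ) = ((b : ℝ) : ℂ) := by
      rw [hb, hPuu lam]; push_cast; rfl
    have hAnl : ∑ i, (((if μ i = -lam then c i else 0) : ℝ) : ℂ) = ((b : ℝ) : ℂ) := by
      rw [show (b:ℝ) = P (-lam) u u from hbflip.symm, hPuu (-lam)]; push_cast; rfl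
    rw [hA0, hAl, hAnl]
    have h2cos : Complex.exp (Complex.I*t*lam) + Complex.exp (-(Complex.I*t*lam))
        = 2 * Complex.cos ((t:ℂ)*(lam:ℂ)) := by
      rw [Complex.two_cos,
        show Complex.I*(t:ℂ)*(lam:ℂ) = ((t:ℂ)*(lam:ℂ))*Complex.I from by ring,
        show (-((t:ℂ)*(lam:ℂ)) * Complex.I : ℂ) = -((t:ℂ)*(lam:ℂ)*Complex.I) from by ring]
    push_cast
    linear_combination (b : ℂ) * h2cos
  refine ⟨?_, ?_⟩
  · -- the entry at t = π / lam
    have hpi : (Real.pi / lam) * lam = Real.pi := div_mul_cancel₀ _ hlam.ne'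
    rw [hform (Real.pi / lam), hpi, Real.cos_pi]
    constructor
    · exact Complex.ofReal_im _
    · rw [Complex.ofReal_re]
      nlinarith [ha_pos, ha_lt, hb_pos, hab]
  · -- infimum is zero
    set x : ℝ := -(a / (2*b)) with hx
    have h2b : 2*b = 1 - a := by linarith [hab]
    have hx1 : -1 ≤ x := by
      rw [hx]
      have : a / (2*b) < 1 := by
        rw [div_lt_one (by linarith)]
        linarith
      linarith
    have hx2 : x ≤ 1 := by
      rw [hx]
      have : 0 < a / (2*b) := div_pos ha_pos (by linarith)
      linarith
    have hxlt : x < 1 := by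
      rw [hx]
      have : 0 < a / (2*b) := div_pos ha_pos (by linarith)
      linarith
    set t0 : ℝ := Real.arccos x / lam with ht0
    have ht0pos : 0 < t0 := div_pos (Real.arccos_pos.mpr hxlt) hlam
    have hcos0 : Real.cos (t0 * lam) = x := by
      rw [ht0, div_mul_cancel₀ _ hlam.ne', Real.cos_arccos hx1 hx2]
    have hval : transition A t0 u u = 0 := by
      rw [hform t0, hcos0, hx]
      have : a + 2*b * -(a / (2*b)) = 0 := by
        field_simp
        ring
      rw [this]
      simp
    have hbdd : BddBelow (Set.range fun t : {t : ℝ // 0 < t} =>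
        ‖transition A (t : ℝ) u u‖) := by
      refine ⟨0, ?_⟩
      rintro y ⟨t, rfl⟩
      exact norm_nonneg _
    refine le_antisymm ?_ (le_ciInf fun t => norm_nonneg _)
    calc (⨅ t : {t : ℝ // 0 < t}, ‖transition A (t : ℝ) u u‖)
        ≤ ‖transition A t0 u u‖ := ciInf_le hbdd ⟨t0, ht0pos⟩
      _ = 0 := by rw [hval]; exact norm_zero
end

section
/- Let A be an n×n real symmetric matrix and B an m×m real symmetric matrix, and let C = A ⊗ I_m + I_n ⊗ B be the adjacency matrix of the Cartesian product (Kronecker sum). Then for all real t and all indices u, v, the factorization |exp(itC)_{(u,v),(u,v)}| = |exp(itA)_{u,u}| · |exp(itB)_{v,v}| holds, and consequently the vertex (u,v) is sedentary for C if and only if u is sedentary for A and v is sedentary for B; that is, inf_{t>0} |exp(itC)_{(u,v),(u,v)}| > 0 if and only if inf_{t>0} |exp(itA)_{u,u}| > 0 and inf_{t>0} |exp(itB)_{v,v}| > 0. -/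
open Matrix
open scoped Kronecker

section Aux
open NormedSpace

variable {n m : Type*} [Fintype n] [DecidableEq n] [Fintype m] [DecidableEq m]

/-- `X ↦ X ⊗ₖ 1` as a ring hom. -/
def kronLeftHom (m : Type*) [Fintype m] [DecidableEq m] :
    Matrix n n ℂ →+* Matrix (n × m) (n × m) ℂ where
  toFun X := X ⊗ₖ (1 : Matrix m m ℂ)
  map_one' := Matrix.one_kronecker_one
  map_mul' X Y := by rw [← Matrix.mul_kronecker_mul, one_mul]
  map_zero' := Matrix.zero_kronecker _
  map_add' X Y := Matrix.add_kronecker _ _ _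

def kronRightHom (n : Type*) [Fintype n] [DecidableEq n] :
    Matrix m m ℂ →+* Matrix (n × m) (n × m) ℂ where
  toFun Y := (1 : Matrix n n ℂ) ⊗ₖ Y
  map_one' := Matrix.one_kronecker_one
  map_mul' X Y := by rw [← Matrix.mul_kronecker_mul, one_mul]
  map_zero' := Matrix.kronecker_zero _
  map_add' X Y := Matrix.kronecker_add _ _ _

lemma contL : Continuous (kronLeftHom m : Matrix n n ℂ →+* Matrix (n × m) (n × m) ℂ) := by
  apply continuous_pi; intro i; apply continuous_pi; intro j
  show Continuous fun X : Matrix n n ℂ => X i.1 j.1 * (1 : Matrix m m ℂ) i.2 j.2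
  exact ((continuous_apply (A := fun _ : n => ℂ) j.1).comp (continuous_apply (A := fun _ : n => n → ℂ) i.1)).mul continuous_const

lemma contR : Continuous (kronRightHom n : Matrix m m ℂ →+* Matrix (n × m) (n × m) ℂ) := by
  apply continuous_pi; intro i; apply continuous_pi; intro j
  show Continuous fun Y : Matrix m m ℂ => (1 : Matrix n n ℂ) i.1 j.1 * Y i.2 j.2
  exact continuous_const.mul ((continuous_apply (A := fun _ : m => ℂ) j.2).comp (continuous_apply (A := fun _ : m => m → ℂ) i.2))

lemma exp_kron_sum (X : Matrix n n ℂ) (Y : Matrix m m ℂ) :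
    exp (X ⊗ₖ (1 : Matrix m m ℂ) + (1 : Matrix n n ℂ) ⊗ₖ Y)
      = exp X ⊗ₖ exp Y := by
  have hc : Commute (X ⊗ₖ (1 : Matrix m m ℂ)) ((1 : Matrix n n ℂ) ⊗ₖ Y) := by
    unfold Commute SemiconjBy
    rw [← Matrix.mul_kronecker_mul, ← Matrix.mul_kronecker_mul, one_mul, mul_one, one_mul, mul_one]
  rw [Matrix.exp_add_of_commute _ _ hc]
  letI : SeminormedRing (Matrix n n ℂ) := Matrix.linftyOpSemiNormedRing
  letI : NormedRing (Matrix n n ℂ) := Matrix.linftyOpNormedRing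
  letI : NormedAlgebra ℂ (Matrix n n ℂ) := Matrix.linftyOpNormedAlgebra
  letI : NormedAlgebra ℚ (Matrix n n ℂ) := Matrix.linftyOpNormedAlgebra
  letI : SeminormedRing (Matrix m m ℂ) := Matrix.linftyOpSemiNormedRing
  letI : NormedRing (Matrix m m ℂ) := Matrix.linftyOpNormedRing
  letI : NormedAlgebra ℂ (Matrix m m ℂ) := Matrix.linftyOpNormedAlgebra
  letI : NormedAlgebra ℚ (Matrix m m ℂ) := Matrix.linftyOpNormedAlgebra
  letI : SeminormedRing (Matrix (n × m) (n × m) ℂ) := Matrix.linftyOpSemiNormedRing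
  letI : NormedRing (Matrix (n × m) (n × m) ℂ) := Matrix.linftyOpNormedRing
  letI : NormedAlgebra ℂ (Matrix (n × m) (n × m) ℂ) := Matrix.linftyOpNormedAlgebra
  letI : NormedAlgebra ℚ (Matrix (n × m) (n × m) ℂ) := Matrix.linftyOpNormedAlgebra
  rw [show X ⊗ₖ (1 : Matrix m m ℂ) = kronLeftHom m X from rfl,
    show (1 : Matrix n n ℂ) ⊗ₖ Y = kronRightHom n Y from rfl]
  erw [← map_exp (kronLeftHom m) contL X, ← map_exp (kronRightHom n) contR Y]
  show (exp X ⊗ₖ 1) * (1 ⊗ₖ exp Y) = _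
  rw [← Matrix.mul_kronecker_mul, mul_one, one_mul]

lemma map_symm_conjTranspose {M : Matrix n n ℝ} (hM : M.IsSymm) :
    (M.map (fun x : ℝ => (x : ℂ)))ᴴ = M.map (fun x : ℝ => (x : ℂ)) := by
  ext i j
  simp [Matrix.conjTranspose_apply, Matrix.map_apply, ← hM.apply i j]

lemma transition_mul_conjTranspose {M : Matrix n n ℝ} (hM : M.IsSymm) (t : ℝ) :
    transition M t * (transition M t)ᴴ = 1 := by
  set N := (Complex.I * t) • M.map (fun x : ℝ => (x : ℂ)) with hN
  have hNH : Nᴴ = -N := by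
    rw [hN, Matrix.conjTranspose_smul, map_symm_conjTranspose hM, ← neg_smul]
    congr 1
    simp [Complex.ext_iff]
  have : transition M t * (transition M t)ᴴ = NormedSpace.exp (N + -N) := by
    rw [Matrix.exp_add_of_commute N (-N) (Commute.neg_right (Commute.refl N))]
    rw [transition, ← hN, ← hNH, Matrix.exp_conjTranspose]
  rw [this, add_neg_cancel, NormedSpace.exp_zero]

lemma transition_abs_le_one {M : Matrix n n ℝ} (hM : M.IsSymm) (t : ℝ) (u : n) :
    ‖transition M t u u‖ ≤ 1 := by
  have h1 := transition_mul_conjTranspose hM t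
  have h2 : ∑ j, Complex.normSq (transition M t u j) = 1 := by
    have h := congrFun (congrFun h1 u) u
    rw [Matrix.mul_apply, Matrix.one_apply_eq] at h
    have h' : ∑ j, (Complex.normSq (transition M t u j) : ℂ) = 1 := by
      rw [← h]
      refine Finset.sum_congr rfl fun j _ => ?_
      rw [Matrix.conjTranspose_apply, ← Complex.mul_conj]
      rfl
    exact_mod_cast h'
  have h3 : Complex.normSq (transition M t u u) ≤ 1 := by
    rw [← h2]
    exact Finset.single_le_sum (fun j _ => Complex.normSq_nonneg _) (Finset.mem_univ u)
  rw [Complex.norm_def]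
  exact Real.sqrt_le_one.mpr h3

lemma transition_kron (A : Matrix n n ℝ) (B : Matrix m m ℝ) (t : ℝ) :
    transition (A ⊗ₖ (1 : Matrix m m ℝ) + (1 : Matrix n n ℝ) ⊗ₖ B) t
      = transition A t ⊗ₖ transition B t := by
  unfold transition
  rw [← exp_kron_sum]
  congr 1
  ext ⟨i, k⟩ ⟨j, l⟩
  simp only [Matrix.smul_apply, Matrix.map_apply, Matrix.add_apply,
    Matrix.kroneckerMap_apply, Matrix.one_apply, smul_eq_mul]
  by_cases hkl : k = l <;> by_cases hij : i = j <;>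
    simp [hkl, hij] <;> push_cast <;> ring

instance : Nonempty {t : ℝ // 0 < t} := ⟨⟨1, one_pos⟩⟩

lemma inf_mul_pos_iff (f g : {t : ℝ // 0 < t} → ℝ)
    (hf0 : ∀ t, 0 ≤ f t) (hg0 : ∀ t, 0 ≤ g t)
    (hf1 : ∀ t, f t ≤ 1) (hg1 : ∀ t, g t ≤ 1) :
    (0 < ⨅ t, f t * g t) ↔ (0 < ⨅ t, f t) ∧ (0 < ⨅ t, g t) := by
  have bddf : BddBelow (Set.range f) := ⟨0, by rintro x ⟨t, rfl⟩; exact hf0 t⟩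
  have bddg : BddBelow (Set.range g) := ⟨0, by rintro x ⟨t, rfl⟩; exact hg0 t⟩
  have bddfg : BddBelow (Set.range fun t => f t * g t) :=
    ⟨0, by rintro x ⟨t, rfl⟩; exact mul_nonneg (hf0 t) (hg0 t)⟩
  constructor
  · intro h
    constructor
    · exact h.trans_le (le_ciInf fun t =>
        (ciInf_le bddfg t).trans (mul_le_of_le_one_right (hf0 t) (hg1 t)))
    · exact h.trans_le (le_ciInf fun t =>
        (ciInf_le bddfg t).trans (mul_le_of_le_one_left (hg0 t) (hf1 t)))
  · rintro ⟨h1, h2⟩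
    exact (mul_pos h1 h2).trans_le (le_ciInf fun t =>
      mul_le_mul (ciInf_le bddf t) (ciInf_le bddg t)
        (le_ciInf fun s => hg0 s) (hf0 t))

end Aux

/-- for the Cartesian product `C = A ⊗ I + I ⊗ B` of weighted graphs with
real symmetric adjacency matrices `A` and `B`, the diagonal entries of the transition
matrix factorize, `|exp(itC)_{(u,v),(u,v)}| = |exp(itA)_{u,u}|·|exp(itB)_{v,v}|`, and
`(u,v)` is sedentary for `C` iff `u` is sedentary for `A` and `v` is sedentary for `B`. -/
theorem stmt19 {n m : ℕ} (A : Matrix (Fin n) (Fin n) ℝ) (hA : A.IsSymm)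
    (B : Matrix (Fin m) (Fin m) ℝ) (hB : B.IsSymm) :
    (∀ (t : ℝ) (u : Fin n) (v : Fin m),
      ‖transition
          (A ⊗ₖ (1 : Matrix (Fin m) (Fin m) ℝ) + (1 : Matrix (Fin n) (Fin n) ℝ) ⊗ₖ B)
          t (u, v) (u, v)‖ =
        ‖transition A t u u‖ * ‖transition B t v v‖) ∧
    (∀ (u : Fin n) (v : Fin m),
      Sedentary (A ⊗ₖ (1 : Matrix (Fin m) (Fin m) ℝ) + (1 : Matrix (Fin n) (Fin n) ℝ) ⊗ₖ B)
          (u, v) ↔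
        Sedentary A u ∧ Sedentary B v) := by
  have key : ∀ (t : ℝ) (u : Fin n) (v : Fin m),
      ‖transition
          (A ⊗ₖ (1 : Matrix (Fin m) (Fin m) ℝ) + (1 : Matrix (Fin n) (Fin n) ℝ) ⊗ₖ B)
          t (u, v) (u, v)‖ =
        ‖transition A t u u‖ * ‖transition B t v v‖ := by
    intro t u v
    rw [transition_kron, Matrix.kroneckerMap_apply, norm_mul]
  refine ⟨key, fun u v => ?_⟩
  unfold Sedentary
  have : (⨅ t : {t : ℝ // 0 < t},
      ‖transition
        (A ⊗ₖ (1 : Matrix (Fin m) (Fin m) ℝ) + (1 : Matrix (Fin n) (Fin n) ℝ) ⊗ₖ B)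
        t (u, v) (u, v)‖)
      = ⨅ t : {t : ℝ // 0 < t},
        ‖transition A t u u‖ * ‖transition B t v v‖ :=
    iInf_congr fun t => key t u v
  rw [this]
  exact inf_mul_pos_iff _ _
    (fun t => norm_nonneg _) (fun t => norm_nonneg _)
    (fun t => transition_abs_le_one hA t u) (fun t => transition_abs_le_one hB t v)
end
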